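/- Let N ∈ ℕ ∪ {0}, λ > 0 and ξ ∈ ℂ. Identify ℝ² with ℂ and define U : ℂ → ℝ by U(y) = log( λ / (1 + λ·|y^{N+1} − ξ|²)² ). Then ΔU(y) + 8(N+1)² |y|^{2N} e^{U(y)} = 0 for every y ∈ ℂ. -/

import Mathlib

open Complex Real

lemma pt_line (y v : ℂ) (s : ℝ) : HasDerivAt (fun t : ℝ => y + (t:ℂ)*v) v s := by
  simpa using (Complex.ofRealCLM.hasDerivAt.mul_const v).const_add y

lemma pt_G (N : ℕ) (ξ y v : ℂ) (s : ℝ) :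
    HasDerivAt (fun t : ℝ => (y + (t:ℂ)*v) ^ (N+1) - ξ) (((N:ℂ)+1)*(y+(s:ℂ)*v)^N*v) s := by
  have h2 := ((hasDerivAt_pow (N+1) (y+(s:ℂ)*v)).comp s (pt_line y v s)).sub_const ξ
  refine h2.congr_deriv ?_
  push_cast
  ring_nf

lemma pt_G1 (N : ℕ) (y v : ℂ) (s : ℝ) :
    HasDerivAt (fun t : ℝ => ((N:ℂ)+1)*(y+(t:ℂ)*v)^N*v)
      (((N:ℂ)+1)*(N:ℂ)*(y+(s:ℂ)*v)^(N-1)*v^2) s := by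
  have h2 := (((hasDerivAt_pow N (y+(s:ℂ)*v)).comp s (pt_line y v s)).const_mul
      ((N:ℂ)+1)).mul_const v
  refine h2.congr_deriv ?_
  ring

lemma pt_re {G : ℝ → ℂ} {G' : ℂ} {s : ℝ} (h : HasDerivAt G G' s) :
    HasDerivAt (fun t => (G t).re) G'.re s := by
  exact Complex.reCLM.hasFDerivAt.comp_hasDerivAt s h

lemma pt_im {G : ℝ → ℂ} {G' : ℂ} {s : ℝ} (h : HasDerivAt G G' s) :
    HasDerivAt (fun t => (G t).im) G'.im s := by
  exact Complex.imCLM.hasFDerivAt.comp_hasDerivAt s h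

lemma pt_Q_deriv (lam : ℝ) {G : ℝ → ℂ} {G' : ℂ} {s : ℝ} (h : HasDerivAt G G' s) :
    HasDerivAt (fun t => 1 + lam * Complex.normSq (G t))
      (lam * (2*(G s).re*G'.re + 2*(G s).im*G'.im)) s := by
  have hfe : (fun t => 1 + lam * Complex.normSq (G t))
      = fun t => 1 + lam * ((G t).re*(G t).re + (G t).im*(G t).im) := by
    funext t; simp [Complex.normSq_apply]
  rw [hfe]
  have h2 := ((((pt_re h).mul (pt_re h)).add ((pt_im h).mul (pt_im h))).const_mul lam).const_add 1
  refine h2.congr_deriv ?_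
  ring

lemma pt_Q1_deriv (lam : ℝ) {G G1 : ℝ → ℂ} {G' G1' : ℂ} {s : ℝ}
    (hG : HasDerivAt G G' s) (hG1 : HasDerivAt G1 G1' s) :
    HasDerivAt (fun t => lam * (2*(G t).re*(G1 t).re + 2*(G t).im*(G1 t).im))
      (lam * (2*(G'.re*(G1 s).re + (G s).re*G1'.re)
            + 2*(G'.im*(G1 s).im + (G s).im*G1'.im))) s := by
  have h2 := (((((pt_re hG).const_mul (2:ℝ)).mul (pt_re hG1)).add
      (((pt_im hG).const_mul (2:ℝ)).mul (pt_im hG1))).const_mul lam)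
  refine h2.congr_deriv ?_
  ring

lemma pt_second {Q Q1 : ℝ → ℝ} {q2 : ℝ} (lam : ℝ) (hlam : 0 < lam)
    (hQ : ∀ s, HasDerivAt Q (Q1 s) s)
    (hQ1 : HasDerivAt Q1 q2 0) (hpos : ∀ s, 0 < Q s) :
    deriv (deriv fun s => Real.log (lam / (Q s)^2)) 0
      = -2 * ((q2 * Q 0 - Q1 0 ^ 2) / (Q 0)^2) := by
  have hfun : (fun s => Real.log (lam / (Q s)^2))
      = fun s => Real.log lam - 2 * Real.log (Q s) := by
    funext s
    rw [Real.log_div (ne_of_gt hlam) (pow_ne_zero 2 (ne_of_gt (hpos s))), Real.log_pow]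
    push_cast; ring
  have hd1 : ∀ s, HasDerivAt (fun t => Real.log lam - 2 * Real.log (Q t))
      (-2 * (Q1 s / Q s)) s := by
    intro s
    have := (((hQ s).log (ne_of_gt (hpos s))).const_mul (2:ℝ)).const_sub (Real.log lam)
    refine this.congr_deriv ?_; ring
  have hderiv1 : deriv (fun t => Real.log lam - 2 * Real.log (Q t))
      = fun s => -2 * (Q1 s / Q s) := funext fun s => (hd1 s).deriv
  have hd2 : HasDerivAt (fun s => -2 * (Q1 s / Q s))
      (-2 * ((q2 * Q 0 - Q1 0 ^ 2) / (Q 0)^2)) 0 := by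
    have := ((hQ1.div (hQ 0) (ne_of_gt (hpos 0)))).const_mul (-2:ℝ)
    refine this.congr_deriv ?_; ring
  rw [hfun, hderiv1, hd2.deriv]

lemma pt_dir (N : ℕ) (lam : ℝ) (hlam : 0 < lam) (ξ y v A B C : ℂ)
    (hA : A = y ^ (N+1) - ξ) (hB : B = ((N:ℂ)+1) * y ^ N * v)
    (hC : C = ((N:ℂ)+1) * (N:ℂ) * y ^ (N-1) * v^2) :
    deriv (deriv fun s : ℝ =>
        Real.log (lam / (1 + lam * Complex.normSq ((y + (s:ℂ)*v) ^ (N+1) - ξ)) ^ 2)) 0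
    = -2 * (((lam * (2*(B.re*B.re + A.re*C.re) + 2*(B.im*B.im + A.im*C.im)))
              * (1 + lam * Complex.normSq A)
          - (lam * (2*A.re*B.re + 2*A.im*B.im))^2)
        / (1 + lam * Complex.normSq A)^2) := by
  have hQ : ∀ s : ℝ, HasDerivAt (fun t : ℝ => 1 + lam * Complex.normSq ((y + (t:ℂ)*v)^(N+1) - ξ))
      (lam * (2*((y+(s:ℂ)*v)^(N+1)-ξ).re*(((N:ℂ)+1)*(y+(s:ℂ)*v)^N*v).re
            + 2*((y+(s:ℂ)*v)^(N+1)-ξ).im*(((N:ℂ)+1)*(y+(s:ℂ)*v)^N*v).im)) s :=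
    fun s => pt_Q_deriv lam (pt_G N ξ y v s)
  have hQ1 : HasDerivAt (fun s : ℝ => lam * (2*((y+(s:ℂ)*v)^(N+1)-ξ).re*(((N:ℂ)+1)*(y+(s:ℂ)*v)^N*v).re
            + 2*((y+(s:ℂ)*v)^(N+1)-ξ).im*(((N:ℂ)+1)*(y+(s:ℂ)*v)^N*v).im))
      (lam * (2*((((N:ℂ)+1)*(y+(0:ℂ)*v)^N*v).re*(((N:ℂ)+1)*(y+(0:ℂ)*v)^N*v).re
              + ((y+(0:ℂ)*v)^(N+1)-ξ).re*(((N:ℂ)+1)*(N:ℂ)*(y+(0:ℂ)*v)^(N-1)*v^2).re)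
            + 2*((((N:ℂ)+1)*(y+(0:ℂ)*v)^N*v).im*(((N:ℂ)+1)*(y+(0:ℂ)*v)^N*v).im
              + ((y+(0:ℂ)*v)^(N+1)-ξ).im*(((N:ℂ)+1)*(N:ℂ)*(y+(0:ℂ)*v)^(N-1)*v^2).im))) 0 := by
    have := pt_Q1_deriv lam (pt_G N ξ y v 0) (pt_G1 N y v 0)
    refine this.congr_deriv ?_
    push_cast; rfl
  have hpos : ∀ s : ℝ, 0 < 1 + lam * Complex.normSq ((y + (s:ℂ)*v)^(N+1) - ξ) := by
    intro s
    have := Complex.normSq_nonneg ((y + (s:ℂ)*v)^(N+1) - ξ)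
    nlinarith
  have := pt_second lam hlam hQ hQ1 hpos
  rw [this]
  simp only [Complex.ofReal_zero, zero_mul, add_zero]
  rw [hA, hB, hC]

/-- The Laplacian `Δ = ∂²/∂y₁² + ∂²/∂y₂²` on `ℝ² ≅ ℂ`. -/
noncomputable def lapC (u : ℂ → ℝ) (y : ℂ) : ℝ :=
  deriv (deriv fun s : ℝ => u (y + (s : ℂ))) 0 +
  deriv (deriv fun s : ℝ => u (y + (s : ℂ) * Complex.I)) 0

/-- the Prajapat–Tarantello bubbles
`U(y) = log(λ/(1+λ|y^{N+1}-ξ|²)²)` solve `ΔU + 8(N+1)²|y|^{2N}e^U = 0` on all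
of `ℂ ≅ ℝ²`. -/
theorem stmt12 (N : ℕ) (lam : ℝ) (hlam : 0 < lam) (ξ : ℂ) (U : ℂ → ℝ)
    (hU : ∀ y : ℂ,
      U y = Real.log (lam / (1 + lam * ‖y ^ (N + 1) - ξ‖ ^ 2) ^ 2)) :
    ∀ y : ℂ,
      lapC U y + 8 * (N + 1 : ℝ) ^ 2 * ‖y‖ ^ (2 * N) * Real.exp (U y)
        = 0 := by
  intro y
  set A : ℂ := y ^ (N+1) - ξ with hAdef
  set c : ℂ := ((N:ℂ)+1) * y ^ N with hcdef
  set e : ℂ := ((N:ℂ)+1) * (N:ℂ) * y ^ (N-1) with hedef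
  have h1 := pt_dir N lam hlam ξ y 1 A c e hAdef (by rw [hcdef]; ring) (by rw [hedef]; ring)
  have h2 := pt_dir N lam hlam ξ y Complex.I A (c * Complex.I) (-e) hAdef
    (by rw [hcdef]) (by rw [hedef, Complex.I_sq]; ring)
  have hfe1 : (fun s : ℝ => U (y + (s:ℂ))) = fun s : ℝ =>
      Real.log (lam / (1 + lam * Complex.normSq ((y + (s:ℂ)*1) ^ (N+1) - ξ)) ^ 2) := by
    funext s
    rw [hU, Complex.sq_norm, mul_one]
  have hfe2 : (fun s : ℝ => U (y + (s:ℂ) * Complex.I)) = fun s : ℝ =>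
      Real.log (lam / (1 + lam * Complex.normSq ((y + (s:ℂ)*Complex.I) ^ (N+1) - ξ)) ^ 2) := by
    funext s
    rw [hU, Complex.sq_norm]
  have hQ0 : 0 < 1 + lam * Complex.normSq A := by
    have := Complex.normSq_nonneg A
    nlinarith
  have hexp : Real.exp (U y) = lam / (1 + lam * Complex.normSq A) ^ 2 := by
    rw [hU, Complex.sq_norm]
    exact Real.exp_log (div_pos hlam (pow_pos hQ0 2))
  rw [lapC]; rw [hfe1, hfe2, h1, h2, hexp]
  have hng : Complex.normSq A = A.re^2 + A.im^2 := by
    rw [Complex.normSq_apply]; ring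
  have hnc : c.re^2 + c.im^2 = ((N:ℝ)+1)^2 * ‖y‖ ^ (2*N) := by
    have h1 : c.re^2 + c.im^2 = Complex.normSq c := by rw [Complex.normSq_apply]; ring
    rw [h1, hcdef, Complex.normSq_mul, map_pow]
    have h2 : ((N:ℂ)+1) = (((N:ℝ)+1 : ℝ) : ℂ) := by push_cast; ring
    rw [h2, Complex.normSq_ofReal]
    rw [← Complex.sq_norm y, ← pow_mul]
    ring
  rw [show (8:ℝ) * ((N:ℝ)+1)^2 * ‖y‖ ^ (2*N) = 8 * (c.re^2 + c.im^2) by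
    rw [hnc]; ring]
  simp only [Complex.mul_I_re, Complex.mul_I_im, Complex.neg_re, Complex.neg_im]
  rw [hng] at hQ0 ⊢
  field_simp
  ring
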